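/- Let K/k be a field extension, A = k[X,Y], Ā = K[X,Y] = K ⊗_k A, and F ∈ A \ k. If p is a prime ideal of A such that k[F] → A/p is an isomorphism, then pĀ is a prime ideal of Ā such that K[F] → Ā/pĀ is an isomorphism. Moreover the map p ↦ pĀ from Γ_alg(F,A) to Γ_alg(F,Ā) is injective. -/

import Mathlib

open MvPolynomial

/-- The set `Γ_alg(F,A)` of primes `p` of `A` (a polynomial ring in two variables over a
field `k`) such that the composite `k[F] ↪ A → A/p` is an isomorphism. -/
def GammaAlg (k : Type) [Field k] (F : MvPolynomial (Fin 2) k) :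
    Set (Ideal (MvPolynomial (Fin 2) k)) :=
  {p | p.IsPrime ∧ Function.Bijective
    (fun q : Polynomial k => Ideal.Quotient.mk p (Polynomial.aeval F q))}

lemma gamma_key (k K : Type) [Field k] [Field K] [Algebra k K]
    (F : MvPolynomial (Fin 2) k) (p : Ideal (MvPolynomial (Fin 2) k))
    (hp : p ∈ GammaAlg k F) :
    (Ideal.map (MvPolynomial.map (algebraMap k K)) p
        ∈ GammaAlg K (MvPolynomial.map (algebraMap k K) F))
    ∧ ∀ a : MvPolynomial (Fin 2) k,
        MvPolynomial.map (algebraMap k K) a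
            ∈ Ideal.map (MvPolynomial.map (algebraMap k K)) p → a ∈ p := by
  obtain ⟨hprime, hbij⟩ := hp
  set f : MvPolynomial (Fin 2) k →+* MvPolynomial (Fin 2) K :=
    MvPolynomial.map (algebraMap k K) with hf
  set Fb : MvPolynomial (Fin 2) K := f F with hFb
  set P : Ideal (MvPolynomial (Fin 2) K) := Ideal.map f p with hP
  -- the algebra isomorphism k[T] ≃ A/p
  set φ' : Polynomial k →ₐ[k] MvPolynomial (Fin 2) k ⧸ p :=
    (Ideal.Quotient.mkₐ k p).comp (Polynomial.aeval F) with hφ'def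
  have hφ' : Function.Bijective φ' := hbij
  set φ : Polynomial k ≃ₐ[k] MvPolynomial (Fin 2) k ⧸ p :=
    AlgEquiv.ofBijective φ' hφ' with hφdef
  set χ : MvPolynomial (Fin 2) k →ₐ[k] Polynomial k :=
    (φ.symm : MvPolynomial (Fin 2) k ⧸ p →ₐ[k] Polynomial k).comp
      (Ideal.Quotient.mkₐ k p) with hχdef
  have hχ : ∀ a, φ (χ a) = Ideal.Quotient.mk p a := fun a => φ.apply_symm_apply _
  have hφX : φ Polynomial.X = Ideal.Quotient.mk p F := by
    show φ' Polynomial.X = _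
    simp [hφ'def]
  have hχF : χ F = Polynomial.X := φ.injective (by rw [hχ, hφX])
  -- the retraction Φ : Ā → K[T]
  set Φ : MvPolynomial (Fin 2) K →ₐ[K] Polynomial K :=
    MvPolynomial.aeval (fun i => (χ (X i)).map (algebraMap k K)) with hΦdef
  have hΦf : ∀ a, Φ (f a) = (χ a).map (algebraMap k K) := by
    have key : (Φ.restrictScalars k).comp (MvPolynomial.mapAlgHom (Algebra.ofId k K))
        = (Polynomial.mapAlgHom (Algebra.ofId k K)).comp χ := by
      apply MvPolynomial.algHom_ext
      intro i
      simp only [hΦdef, MvPolynomial.mapAlgHom_apply, Polynomial.mapAlgHom, Algebra.ofId_apply,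
        AlgHom.coe_comp, AlgHom.coe_restrictScalars', Function.comp_apply, AlgHom.coe_mk,
        MvPolynomial.map_X, MvPolynomial.aeval_X, Polynomial.coe_mapRingHom]
      rfl
    intro a
    have h2 := congrArg (fun (h : _ →ₐ[k] _) => h a) key
    simpa [MvPolynomial.mapAlgHom_apply, Polynomial.mapAlgHom, Algebra.ofId_apply] using h2
  -- the section σ : K[T] → Ā
  set σ : Polynomial K →ₐ[K] MvPolynomial (Fin 2) K := Polynomial.aeval Fb with hσdef
  have hσmap : ∀ q : Polynomial k,
      σ (q.map (algebraMap k K)) = f (Polynomial.aeval F q) := by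
    intro q
    have h1 : σ (q.map (algebraMap k K)) = Polynomial.aeval (R := k) Fb q :=
      Polynomial.aeval_map_algebraMap _ _ _
    have h2 : f (Polynomial.aeval F q) = Polynomial.aeval (R := k) Fb q := by
      have := (Polynomial.aeval_algHom_apply
        (MvPolynomial.mapAlgHom (R := k) (σ := Fin 2) (Algebra.ofId k K)) F q).symm
      simpa [MvPolynomial.mapAlgHom_apply, hf, hFb] using this
    rw [h1, h2]
  have hΦF : Φ Fb = Polynomial.X := by
    rw [hFb, hΦf, hχF, Polynomial.map_X]
  have hΦσ : ∀ q : Polynomial K, Φ (σ q) = q := by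
    have : Φ.comp σ = AlgHom.id K (Polynomial K) := by
      apply Polynomial.algHom_ext
      simp [hσdef, hΦF]
    intro q
    exact congrArg (fun (h : _ →ₐ[K] _) => h q) this
  have hXi : ∀ i : Fin 2, X i - σ (Φ (X i)) ∈ P := by
    intro i
    have h1 : Φ (X i) = (χ (X i)).map (algebraMap k K) := by
      rw [hΦdef]; simp
    have h2 : Ideal.Quotient.mk p (Polynomial.aeval F (χ (X i)))
        = Ideal.Quotient.mk p (X i) := by
      have : Ideal.Quotient.mk p (Polynomial.aeval F (χ (X i))) = φ (χ (X i)) := rfl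
      rw [this, hχ]
    have h3 : X i - Polynomial.aeval F (χ (X i)) ∈ p := Ideal.Quotient.eq.mp h2.symm
    have h4 : (X i : MvPolynomial (Fin 2) K) = f (X i) := by simp [hf]
    rw [h1, hσmap, h4, ← map_sub]
    exact Ideal.mem_map_of_mem f h3
  have hsec : ∀ g : MvPolynomial (Fin 2) K, g - σ (Φ g) ∈ P := by
    intro g
    induction g using MvPolynomial.induction_on with
    | C a =>
      have : (C a : MvPolynomial (Fin 2) K) - σ (Φ (C a)) = 0 := by
        have h1 : Φ (C a) = Polynomial.C a := by
          rw [hΦdef]; simp [MvPolynomial.algebraMap_eq]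
        rw [h1]
        have h2 : σ (Polynomial.C a) = C a := by
          simp [hσdef, MvPolynomial.algebraMap_eq]
        rw [h2, sub_self]
      rw [this]; exact P.zero_mem
    | add g h hg hh =>
      have : g + h - σ (Φ (g + h)) = (g - σ (Φ g)) + (h - σ (Φ h)) := by
        rw [map_add, map_add]; ring
      rw [this]; exact P.add_mem hg hh
    | mul_X g i hg =>
      have : g * X i - σ (Φ (g * X i))
          = (g - σ (Φ g)) * X i + σ (Φ g) * (X i - σ (Φ (X i))) := by
        rw [map_mul, map_mul]; ring
      rw [this]
      exact P.add_mem (P.mul_mem_right _ hg) (P.mul_mem_left _ (hXi i))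
  have hχ0 : ∀ a ∈ p, χ a = 0 := by
    intro a ha
    apply φ.injective
    rw [hχ, map_zero, Ideal.Quotient.eq_zero_iff_mem.mpr ha]
  have hker : RingHom.ker Φ = P := by
    apply le_antisymm
    · intro g hg
      have h1 : Φ g = 0 := hg
      have := hsec g
      rwa [h1, map_zero, sub_zero] at this
    · rw [hP, Ideal.map_le_iff_le_comap]
      intro a ha
      rw [Ideal.mem_comap, RingHom.mem_ker, hΦf, hχ0 a ha, Polynomial.map_zero]
  have hmem : ∀ a : MvPolynomial (Fin 2) k, f a ∈ P → a ∈ p := by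
    intro a ha
    rw [← hker, RingHom.mem_ker, hΦf] at ha
    have h0 : χ a = 0 := by
      have := Polynomial.map_injective (algebraMap k K) (algebraMap k K).injective
      apply this
      rwa [Polynomial.map_zero]
    have : Ideal.Quotient.mk p a = 0 := by rw [← hχ a, h0, map_zero]
    exact Ideal.Quotient.eq_zero_iff_mem.mp this
  refine ⟨⟨hker ▸ RingHom.ker_isPrime Φ, ?_, ?_⟩, hmem⟩
  · -- injective
    intro q1 q2 h
    have hsub : Polynomial.aeval Fb q1 - Polynomial.aeval Fb q2 ∈ P :=
      Ideal.Quotient.eq.mp h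
    have : σ (q1 - q2) ∈ RingHom.ker Φ := by
      rw [hker, map_sub]; exact hsub
    rw [RingHom.mem_ker, hΦσ] at this
    exact sub_eq_zero.mp this
  · -- surjective
    intro y
    obtain ⟨g, rfl⟩ := Ideal.Quotient.mk_surjective y
    refine ⟨Φ g, ?_⟩
    show Ideal.Quotient.mk P (Polynomial.aeval Fb (Φ g)) = Ideal.Quotient.mk P g
    apply Ideal.Quotient.eq.mpr
    have := hsec g
    have h := P.neg_mem this
    rwa [neg_sub] at h

theorem stmt8 (k K : Type) [Field k] [Field K] [Algebra k K]
    (F : MvPolynomial (Fin 2) k) (hF : ∀ c : k, F ≠ C c) :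
    (∀ p ∈ GammaAlg k F,
        Ideal.map (MvPolynomial.map (algebraMap k K)) p
          ∈ GammaAlg K (MvPolynomial.map (algebraMap k K) F))
    ∧ ∀ p ∈ GammaAlg k F, ∀ q ∈ GammaAlg k F,
        Ideal.map (MvPolynomial.map (algebraMap k K)) p
          = Ideal.map (MvPolynomial.map (algebraMap k K)) q → p = q := by
  refine ⟨fun p hp => (gamma_key k K F p hp).1, fun p hp q hq h => ?_⟩
  apply le_antisymm
  · intro a ha
    exact (gamma_key k K F q hq).2 a (h ▸ Ideal.mem_map_of_mem _ ha)
  · intro a ha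
    exact (gamma_key k K F p hp).2 a (h.symm ▸ Ideal.mem_map_of_mem _ ha)
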